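/- Let S be a connected colorful graph with n vertices and m edges. Then the number of color-preserving homomorphisms from S to the CFI graph Γ(S, χ_∅) with the all-zero charge equals 2^(m − n + 1). -/

import Mathlib

open SimpleGraph

/-- Color-preserving homomorphism count between colored graphs. -/
noncomputable def cpHomCount {VH VG C : Type} (H : SimpleGraph VH) (cH : VH → C)
    (G : SimpleGraph VG) (cG : VG → C) : ℕ :=
  Nat.card {f : H →g G // ∀ v, cG (f v) = cH v}

variable {V : Type} [Fintype V] [DecidableEq V]

/-- Vertices of the CFI graph over a colorful graph `S`: pairs of a color `v ∈ V(S)`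
and an even assignment on the edges incident to `v` (encoded as a function on all of
`Sym2 V` supported on the incidence set of `v`). -/
def CFIVert (S : SimpleGraph V) : Type :=
  Σ v : V, {a : Sym2 V → ZMod 2 //
    (∀ e, a e ≠ 0 → e ∈ S.incidenceSet v) ∧ ∑ e : Sym2 V, a e = 0}

/-- The CFI graph of a colorful graph `S` with charge function `c`: vertices
`(u, a_u)` and `(v, a_v)` are adjacent iff `uv ∈ E(S)` and
`a_u(uv) + a_v(uv) = c(uv)`.  Its coloring is `Sigma.fst : CFIVert S → V`. -/
def CFI (S : SimpleGraph V) (c : Sym2 V → ZMod 2) : SimpleGraph (CFIVert S) where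
  Adj x y := S.Adj x.1 y.1 ∧ x.2.1 s(x.1, y.1) + y.2.1 s(x.1, y.1) = c s(x.1, y.1)
  symm := by
    constructor
    rintro ⟨u, a⟩ ⟨v, b⟩ ⟨hadj, hsum⟩
    refine ⟨hadj.symm, ?_⟩
    simp only [Sym2.eq_swap (a := v) (b := u)]
    rw [add_comm]; exact hsum
  loopless := ⟨fun x h => S.irrefl h.1⟩



/-- The vertex-incidence linear map. -/
noncomputable def vtxMap (S : SimpleGraph V) [DecidableRel S.Adj] :
    (S.edgeSet → ZMod 2) →ₗ[ZMod 2] (V → ZMod 2) where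
  toFun b v := ∑ e : S.edgeSet, if v ∈ (e : Sym2 V) then b e else 0
  map_add' b c := by
    funext v
    rw [Pi.add_apply, ← Finset.sum_add_distrib]
    refine Finset.sum_congr rfl fun e _ => ?_
    split <;> simp
  map_smul' r b := by
    funext v
    rw [RingHom.id_apply, Pi.smul_apply, Finset.smul_sum]
    refine Finset.sum_congr rfl fun e _ => ?_
    split <;> simp

lemma vtxMap_apply (S : SimpleGraph V) [DecidableRel S.Adj] (b : S.edgeSet → ZMod 2) (v : V) :
    vtxMap S b v = ∑ e : S.edgeSet, if v ∈ (e : Sym2 V) then b e else 0 := rfl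

/-- Indicator vector of a vertex. -/
noncomputable def δ (v : V) : V → ZMod 2 := Pi.single v 1

lemma δ_apply (v w : V) : δ v w = if w = v then 1 else 0 := Pi.single_apply v 1 w

/-- The sum-of-coordinates linear map. -/
noncomputable def sumMap : (V → ZMod 2) →ₗ[ZMod 2] ZMod 2 where
  toFun g := ∑ v, g v
  map_add' g h := by simp [Finset.sum_add_distrib]
  map_smul' r g := by simp [Finset.mul_sum]

section Range
variable (S : SimpleGraph V) [DecidableRel S.Adj]

lemma sum_ite_mem_sym2 {x y : V} (hxy : x ≠ y) (z : ZMod 2) :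
    ∑ v : V, (if v ∈ s(x, y) then z else 0) = 0 := by
  have h : ∀ v : V, (if v ∈ s(x, y) then z else 0)
      = (if v = x then z else 0) + (if v = y then z else 0) := by
    intro v
    by_cases hx : v = x <;> by_cases hy : v = y <;>
      simp [Sym2.mem_iff, hx, hy] <;> simp_all
  rw [Finset.sum_congr rfl fun v _ => h v, Finset.sum_add_distrib,
    Finset.sum_ite_eq' Finset.univ x (fun _ => z),
    Finset.sum_ite_eq' Finset.univ y (fun _ => z)]
  simp
  exact CharTwo.add_self_eq_zero z

lemma range_le : LinearMap.range (vtxMap S) ≤ LinearMap.ker sumMap := by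
  rintro _ ⟨b, rfl⟩
  simp only [LinearMap.mem_ker]
  show ∑ v, vtxMap S b v = 0
  simp only [vtxMap_apply]
  rw [Finset.sum_comm]
  refine Finset.sum_eq_zero ?_
  rintro ⟨e, he⟩ -
  revert he
  refine Sym2.inductionOn e fun x y => ?_
  intro he
  exact sum_ite_mem_sym2 (S.ne_of_adj (S.mem_edgeSet.mp he)) _

lemma single_edge_mem_range {x y : V} (hxy : S.Adj x y) :
    δ x + δ y ∈ LinearMap.range (vtxMap S) := by
  refine ⟨fun e => if (e : Sym2 V) = s(x, y) then 1 else 0, ?_⟩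
  funext v
  rw [vtxMap_apply]
  have key : ∀ e : S.edgeSet,
      (if v ∈ (e : Sym2 V) then (if (e : Sym2 V) = s(x, y) then (1 : ZMod 2) else 0) else 0)
      = if e = (⟨s(x, y), S.mem_edgeSet.mpr hxy⟩ : S.edgeSet)
          then (if v ∈ s(x, y) then (1 : ZMod 2) else 0) else 0 := by
    rintro ⟨e, he⟩
    simp only [Subtype.mk.injEq]
    by_cases h : e = s(x, y) <;> by_cases h2 : v ∈ e <;> simp_all
  rw [Finset.sum_congr rfl fun e _ => key e,
    Finset.sum_ite_eq' Finset.univ _ (fun _ => if v ∈ s(x, y) then (1 : ZMod 2) else 0)]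
  have hne := S.ne_of_adj hxy
  by_cases hx : v = x <;> by_cases hy : v = y <;>
    simp_all [δ_apply, Sym2.mem_iff]

lemma walk_mem_range {x y : V} (p : S.Walk x y) :
    δ x + δ y ∈ LinearMap.range (vtxMap S) := by
  induction p with
  | nil =>
    rename_i a
    have h0 : δ a + δ a = 0 := by
      funext w; simp [CharTwo.add_self_eq_zero]
    rw [h0]
    exact (LinearMap.range (vtxMap S)).zero_mem
  | @cons u v w h p ih =>
    have h1 := single_edge_mem_range S h
    have hmem := (LinearMap.range (vtxMap S)).add_mem h1 ih
    have heq : δ u + δ v + (δ v + δ w)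
        = δ u + δ w := by
      funext z
      simp only [Pi.add_apply]
      ring_nf
      have hz : δ v z * 2 = 0 := by rw [mul_two]; exact CharTwo.add_self_eq_zero _
      rw [hz, add_zero]
    rwa [heq] at hmem

lemma ker_le_range (hconn : S.Connected) :
    LinearMap.ker sumMap ≤ LinearMap.range (vtxMap S) := by
  intro g hg
  have hV : Nonempty V := hconn.nonempty
  obtain ⟨v0⟩ := hV
  have hsum : ∑ v, g v = 0 := hg
  have hrep : g = ∑ v, g v • (δ v + δ v0) := by
    have h1 : ∑ v, g v • (δ v + δ v0)
        = (∑ v, g v • δ v) + (∑ v, g v) • δ v0 := by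
      rw [Finset.sum_smul, ← Finset.sum_add_distrib]
      refine Finset.sum_congr rfl fun v _ => ?_
      rw [smul_add]
    rw [h1, hsum, zero_smul, add_zero]
    funext w
    rw [Finset.sum_apply]
    have h2 : ∀ v : V, (g v • δ v) w = if v = w then g v else 0 := by
      intro v
      rw [Pi.smul_apply, δ_apply]
      by_cases h : v = w
      · subst h; simp
      · have h' : ¬(w = v) := fun hh => h hh.symm
        simp [h, h']
    rw [Finset.sum_congr rfl fun v _ => h2 v, Finset.sum_ite_eq' Finset.univ w g]
    simp
  rw [hrep]
  refine Submodule.sum_mem _ fun v _ => Submodule.smul_mem _ _ ?_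
  obtain ⟨p⟩ := hconn.preconnected v v0
  exact walk_mem_range S p

lemma range_eq (hconn : S.Connected) :
    LinearMap.range (vtxMap S) = LinearMap.ker sumMap :=
  le_antisymm (range_le S) (ker_le_range S hconn)

end Range

section Equiv
variable (S : SimpleGraph V) [DecidableRel S.Adj]


/-- The values of a color-preserving homomorphism agree on the two endpoints of an edge. -/
lemma hom_agree (f : S →g CFI S (fun _ => 0)) (hf : ∀ v, (f v).1 = v)
    {u w : V} {e : Sym2 V} (he : e ∈ S.edgeSet) (hu : u ∈ e) (hw : w ∈ e) :
    (f u).2.1 e = (f w).2.1 e := by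
  by_cases huw : u = w
  · rw [huw]
  · have hew : e = s(u, w) := (Sym2.mem_and_mem_iff huw).mp ⟨hu, hw⟩
    subst hew
    have hadj : S.Adj u w := S.mem_edgeSet.mp he
    have hmap := f.map_rel hadj
    have hsum : (f u).2.1 s((f u).1, (f w).1) + (f w).2.1 s((f u).1, (f w).1) = 0 := And.right hmap
    have hse : s((f u).1, (f w).1) = s(u, w) := by rw [hf u, hf w]
    rw [hse] at hsum
    have h2 := eq_neg_of_add_eq_zero_left hsum
    rwa [CharTwo.neg_eq] at h2

noncomputable def homToKer (f : {f : S →g CFI S (fun _ => 0) // ∀ v, Sigma.fst (f v) = v}) :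
    LinearMap.ker (vtxMap S) := by
  refine ⟨fun e => (f.1 ((e : Sym2 V).out.1)).2.1 e, ?_⟩
  rw [LinearMap.mem_ker]
  funext v
  rw [vtxMap_apply]
  have key : ∀ e : S.edgeSet,
      (if v ∈ (e : Sym2 V) then (f.1 ((e : Sym2 V).out.1)).2.1 e else 0)
        = (f.1 v).2.1 e := by
    rintro ⟨e, he⟩
    by_cases hv : v ∈ e
    · simp only [hv, if_pos]
      exact hom_agree S f.1 f.2 he (Sym2.out_fst_mem e) hv
    · rw [if_neg hv]
      by_contra hne
      have := ((f.1 v).2.2.1 e fun h => hne h.symm)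
      rw [f.2 v] at this
      exact hv this.2
  rw [Finset.sum_congr rfl fun e _ => key e]
  have hsupp : ∀ e : Sym2 V, e ∉ S.edgeSet → (f.1 v).2.1 e = 0 := by
    intro e he
    by_contra hne
    have := (f.1 v).2.2.1 e hne
    rw [f.2 v] at this
    exact he this.1
  rw [Pi.zero_apply, Finset.sum_set_coe,
    Finset.sum_subset (Finset.subset_univ _)
      (fun e _ he => hsupp e (by simpa [Set.mem_toFinset] using he))]
  exact (f.1 v).2.2.2

end Equiv

section Back
variable (S : SimpleGraph V) [DecidableRel S.Adj]

/-- Vertex assignment induced by an edge assignment in the kernel. -/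
noncomputable def kerAsgn (b : S.edgeSet → ZMod 2) (v : V) : Sym2 V → ZMod 2 :=
  fun e => if h : e ∈ S.edgeSet then (if v ∈ e then b ⟨e, h⟩ else 0) else 0

lemma kerAsgn_incidence (b : S.edgeSet → ZMod 2) (v : V) {e : Sym2 V}
    (h : e ∈ S.edgeSet) (hv : v ∈ e) : kerAsgn S b v e = b ⟨e, h⟩ := by
  simp [kerAsgn, h, hv]

lemma kerAsgn_support (b : S.edgeSet → ZMod 2) (v : V) (e : Sym2 V)
    (h : kerAsgn S b v e ≠ 0) : e ∈ S.incidenceSet v := by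
  by_cases he : e ∈ S.edgeSet
  · by_cases hv : v ∈ e
    · exact ⟨he, hv⟩
    · exact absurd (by simp [kerAsgn, he, hv]) h
  · exact absurd (by simp [kerAsgn, he]) h

lemma kerAsgn_sum (b : S.edgeSet → ZMod 2) (hb : vtxMap S b = 0) (v : V) :
    ∑ e : Sym2 V, kerAsgn S b v e = 0 := by
  have h1 : ∑ e : Sym2 V, kerAsgn S b v e = ∑ e ∈ S.edgeSet.toFinset, kerAsgn S b v e :=
    (Finset.sum_subset (Finset.subset_univ _) (fun e _ he => by
      simp [kerAsgn, (by simpa [Set.mem_toFinset] using he : e ∉ S.edgeSet)])).symm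
  have h2 : ∀ e : S.edgeSet, kerAsgn S b v e = if v ∈ (e : Sym2 V) then b e else 0 := by
    rintro ⟨e, he⟩
    simp [kerAsgn, he]
  rw [h1, ← Finset.sum_set_coe, Finset.sum_congr rfl fun e _ => h2 e, ← vtxMap_apply, hb,
    Pi.zero_apply]

noncomputable def kerToHom (b : LinearMap.ker (vtxMap S)) :
    {f : S →g CFI S (fun _ => 0) // ∀ v, Sigma.fst (f v) = v} := by
  refine ⟨⟨fun v => ⟨v, kerAsgn S b.1 v, kerAsgn_support S b.1 v,
    kerAsgn_sum S b.1 (LinearMap.mem_ker.mp b.2) v⟩, ?_⟩, fun v => rfl⟩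
  intro u w hadj
  refine And.intro hadj ?_
  show kerAsgn S b.1 u s(u, w) + kerAsgn S b.1 w s(u, w) = 0
  have he : s(u, w) ∈ S.edgeSet := S.mem_edgeSet.mpr hadj
  rw [kerAsgn_incidence S b.1 u he (Sym2.mem_mk_left u w),
    kerAsgn_incidence S b.1 w he (Sym2.mem_mk_right u w)]
  exact CharTwo.add_self_eq_zero _

end Back

section Inv
variable (S : SimpleGraph V) [DecidableRel S.Adj]

lemma homToKer_kerToHom (b : LinearMap.ker (vtxMap S)) :
    homToKer S (kerToHom S b) = b := by
  refine Subtype.ext (funext fun e => ?_)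
  show kerAsgn S b.1 ((e : Sym2 V).out.1) e = b.1 e
  rw [kerAsgn_incidence S b.1 _ e.2 (Sym2.out_fst_mem (e : Sym2 V))]

lemma kerToHom_homToKer (f : {f : S →g CFI S (fun _ => 0) // ∀ v, Sigma.fst (f v) = v}) :
    kerToHom S (homToKer S f) = f := by
  refine Subtype.ext (DFunLike.ext _ _ fun v => ?_)
  have hv := f.2 v
  rcases hq : f.1 v with ⟨w, a⟩
  rw [hq] at hv
  dsimp at hv
  subst hv
  refine congrArg (Sigma.mk w) (Subtype.ext (funext fun e => ?_))
  show kerAsgn S (homToKer S f).1 w e = a.1 e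
  by_cases he : e ∈ S.edgeSet
  · by_cases hve : w ∈ e
    · rw [kerAsgn_incidence S _ w he hve]
      show (f.1 ((e : Sym2 V).out.1)).2.1 e = a.1 e
      rw [hom_agree S f.1 f.2 he (Sym2.out_fst_mem e) hve, hq]
    · have h1 : kerAsgn S (homToKer S f).1 w e = 0 := by
        by_contra h
        exact hve (kerAsgn_support S _ w e h).2
      have h2 : a.1 e = 0 := by
        by_contra h
        exact hve (a.2.1 e h).2
      rw [h1, h2]
  · have h1 : kerAsgn S (homToKer S f).1 w e = 0 := by
      by_contra h
      exact he (kerAsgn_support S _ w e h).1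
    have h2 : a.1 e = 0 := by
      by_contra h
      exact he (a.2.1 e h).1
    rw [h1, h2]

noncomputable def homKerEquiv :
    {f : S →g CFI S (fun _ => 0) // ∀ v, Sigma.fst (f v) = v} ≃ LinearMap.ker (vtxMap S) :=
  ⟨homToKer S, kerToHom S, kerToHom_homToKer S, homToKer_kerToHom S⟩

end Inv

section Count
variable (S : SimpleGraph V) [DecidableRel S.Adj]

lemma sumMap_surjective (hV : Nonempty V) : Function.Surjective (sumMap (V := V)) := by
  obtain ⟨v0⟩ := hV
  intro z
  refine ⟨z • δ v0, ?_⟩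
  show ∑ v, (z • δ v0) v = z
  have h : ∀ v, (z • δ v0) v = if v = v0 then z else 0 := by
    intro v
    rw [Pi.smul_apply, δ_apply]
    by_cases h : v = v0 <;> simp [h]
  rw [Finset.sum_congr rfl fun v _ => h v, Finset.sum_ite_eq' Finset.univ v0 (fun _ => z)]
  simp

lemma card_ker_sumMap (hV : Nonempty V) :
    2 * Nat.card (LinearMap.ker (sumMap (V := V))) = 2 ^ Fintype.card V := by
  have h1 := Submodule.card_eq_card_quotient_mul_card (LinearMap.ker (sumMap (V := V)))
  have h2 : Nat.card ((V → ZMod 2) ⧸ LinearMap.ker (sumMap (V := V))) = 2 := by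
    rw [Nat.card_congr (sumMap (V := V)).quotKerEquivRange.toEquiv,
      LinearMap.range_eq_top.mpr (sumMap_surjective hV),
      Nat.card_congr Submodule.topEquiv.toEquiv]
    simp [Nat.card_eq_fintype_card]
  have h3 : Nat.card (V → ZMod 2) = 2 ^ Fintype.card V := by
    rw [Nat.card_eq_fintype_card, Fintype.card_fun]
    simp
  rw [← h3, h1, h2]
  exact Nat.mul_comm _ _

lemma card_ker_vtxMap (hconn : S.Connected) :
    Nat.card (LinearMap.ker (sumMap (V := V))) * Nat.card (LinearMap.ker (vtxMap S))
      = 2 ^ S.edgeFinset.card := by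
  have h1 := Submodule.card_eq_card_quotient_mul_card (LinearMap.ker (vtxMap S))
  have h2 : Nat.card ((S.edgeSet → ZMod 2) ⧸ LinearMap.ker (vtxMap S))
      = Nat.card (LinearMap.ker (sumMap (V := V))) := by
    rw [Nat.card_congr (vtxMap S).quotKerEquivRange.toEquiv, range_eq S hconn]
  have h3 : Nat.card (S.edgeSet → ZMod 2) = 2 ^ S.edgeFinset.card := by
    rw [Nat.card_eq_fintype_card, Fintype.card_fun, SimpleGraph.edgeFinset]
    simp [Set.toFinset_card]
  rw [← h3, h1, h2]
  exact Nat.mul_comm _ _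

end Count

theorem cpHomCount_CFI_aux
    (S : SimpleGraph V) [DecidableRel S.Adj] (hconn : S.Connected) :
    Nat.card {f : S →g CFI S (fun _ => 0) // ∀ v, Sigma.fst (f v) = v} =
      2 ^ (S.edgeFinset.card + 1 - Fintype.card V) := by
  have hV : Nonempty V := hconn.nonempty
  have hn : 1 ≤ Fintype.card V := Fintype.card_pos
  set n := Fintype.card V with hndef
  set m := S.edgeFinset.card with hmdef
  set K1 := Nat.card (LinearMap.ker (vtxMap S)) with hK1def
  set K2 := Nat.card (LinearMap.ker (sumMap (V := V))) with hK2def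
  have e1 : K2 * K1 = 2 ^ m := card_ker_vtxMap S hconn
  have e2 : 2 * K2 = 2 ^ n := card_ker_sumMap hV
  have hK2 : K2 = 2 ^ (n - 1) := by
    have : 2 * K2 = 2 * 2 ^ (n - 1) := by
      rw [e2, ← pow_succ']
      congr 1
      omega
    omega
  have hK1pos : 0 < K1 := Nat.card_pos
  have hle : n - 1 ≤ m := by
    have h2 : 2 ^ (n - 1) ≤ 2 ^ m := by
      calc 2 ^ (n - 1) = 2 ^ (n - 1) * 1 := by ring
      _ ≤ 2 ^ (n - 1) * K1 := by exact Nat.mul_le_mul_left _ hK1pos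
      _ = 2 ^ m := by rw [← hK2, e1]
    exact (Nat.pow_le_pow_iff_right one_lt_two).mp h2
  have hK1 : K1 = 2 ^ (m - (n - 1)) := by
    have h4 : 2 ^ (n - 1) * K1 = 2 ^ (n - 1) * 2 ^ (m - (n - 1)) := by
      rw [← pow_add, ← hK2, e1]
      congr 1
      omega
    exact Nat.eq_of_mul_eq_mul_left (Nat.pow_pos (by norm_num)) h4
  rw [Nat.card_congr (homKerEquiv S), ← hK1def, hK1]
  congr 1
  omega


/-- For a connected colorful graph `S` with `n` vertices and `m` edges, the number of
color-preserving homomorphisms from `S` into the CFI graph `Γ(S, χ_∅)` with the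
all-zero charge equals `2^(m − n + 1)`. -/
theorem cpHomCount_CFI_zero_charge
    (S : SimpleGraph V) [DecidableRel S.Adj] (hconn : S.Connected) :
    cpHomCount S id (CFI S (fun _ => 0)) Sigma.fst =
      2 ^ (S.edgeFinset.card + 1 - Fintype.card V) := by
  have h := cpHomCount_CFI_aux S hconn
  unfold cpHomCount
  exact h
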